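/- Let f be an excursion. Then d_L[f] and d_T[f] are pseudo-distances on [0,1]: they are nonnegative, finite, symmetric, vanish on the diagonal, and satisfy the triangle inequality. Consequently d_V[f] = d_T[f] + 2·d_L[f] is also a pseudo-distance on [0,1]. -/

import Mathlib

open Set Filter Topology
open scoped Classical

noncomputable section

/-- Left limit of `f` at `t`, with the convention `f(0−) = 0`. -/
def lm (f : ℝ → ℝ) (t : ℝ) : ℝ := if t = 0 then 0 else Function.leftLim f t

/-- The jump `Δ_t(f) = f t − f(t−)`. -/
def jump (f : ℝ → ℝ) (t : ℝ) : ℝ := f t - lm f t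

/-- `inf_{[s,t]} f`. -/
def infIcc (f : ℝ → ℝ) (s t : ℝ) : ℝ := sInf (f '' Icc s t)

/-- An excursion: a càdlàg function on `[0,1]`, nonnegative, vanishing at `1` (and
extended by `0` outside `[0,1]`), all of whose jumps are nonnegative. -/
structure IsExcursion (f : ℝ → ℝ) : Prop where
  nonneg : ∀ t ∈ Icc (0:ℝ) 1, 0 ≤ f t
  zero_outside : ∀ t, t ∉ Icc (0:ℝ) 1 → f t = 0
  rightCont : ∀ t ∈ Ico (0:ℝ) 1, Tendsto f (𝓝[>] t) (𝓝 (f t))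
  leftLimEx : ∀ t ∈ Ioc (0:ℝ) 1, Tendsto f (𝓝[<] t) (𝓝 (Function.leftLim f t))
  one : f 1 = 0
  jump_nonneg : ∀ t ∈ Icc (0:ℝ) 1, 0 ≤ jump f t

/-- The genealogical relation `s ⪯_f t` : `s ≤ t` and `f(s−) ≤ inf_{[s,t]} f`. -/
def pre (f : ℝ → ℝ) (s t : ℝ) : Prop := s ≤ t ∧ lm f s ≤ infIcc f s t

/-- `x_s^t(f) = 1_{s ≤ t} · max(inf_{[s,t]} f − f(s−), 0)`. -/
def xst (f : ℝ → ℝ) (s t : ℝ) : ℝ := if s ≤ t then max (infIcc f s t - lm f s) 0 else 0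

/-- The most recent common ancestor `s ∧_f t`. -/
def mrca (f : ℝ → ℝ) (s t : ℝ) : ℝ := sSup {r : ℝ | 0 ≤ r ∧ pre f r s ∧ pre f r t}

/-- `δ_t(a,b) = min(|a−b|, Δ_t(f) − |a−b|)`, the circle pseudo-distance on `[0, Δ_t(f)]`. -/
def cdel (f : ℝ → ℝ) (t a b : ℝ) : ℝ := min |a - b| (jump f t - |a - b|)

/-- `d_O(s,t) = ∑_{s ≺_f r ⪯_f t} δ_r(0, x_r^t)`. -/
def dO (f : ℝ → ℝ) (s t : ℝ) : ℝ :=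
  ∑' r : ℝ, if pre f s r ∧ s < r ∧ pre f r t then cdel f r 0 (xst f r t) else 0

/-- `d_T(s,t) = f t − inf_{[s,t]} f − ∑_{s ≺_f r ⪯_f t} x_r^t`, intended for `s ⪯_f t`. -/
def dTanc (f : ℝ → ℝ) (s t : ℝ) : ℝ :=
  f t - infIcc f s t - ∑' r : ℝ, if pre f s r ∧ s < r ∧ pre f r t then xst f r t else 0

/-- The looptree pseudo-distance `d_L[f]`. -/
def dL (f : ℝ → ℝ) (s t : ℝ) : ℝ :=
  cdel f (mrca f s t) (xst f (mrca f s t) s) (xst f (mrca f s t) t)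
    + dO f (mrca f s t) s + dO f (mrca f s t) t

/-- The tree pseudo-distance `d_T[f]`. -/
def dT (f : ℝ → ℝ) (s t : ℝ) : ℝ := dTanc f (mrca f s t) s + dTanc f (mrca f s t) t

/-- The vernation pseudo-distance `d_V[f] = d_T[f] + 2·d_L[f]`. -/
def dV (f : ℝ → ℝ) (s t : ℝ) : ℝ := dT f s t + 2 * dL f s t

/-- `Jf(t) = ∑_{r ⪯_f t} x_r^t(f)`. -/
def Jop (f : ℝ → ℝ) (t : ℝ) : ℝ := ∑' r : ℝ, if pre f r t then xst f r t else 0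

/-- `J^ε f(t) = ∑_{r ⪯_f t, Δ_r(f) ≥ ε} x_r^t(f)`. -/
def Jeps (f : ℝ → ℝ) (ε : ℝ) (t : ℝ) : ℝ :=
  ∑' r : ℝ, if pre f r t ∧ ε ≤ jump f r then xst f r t else 0

/-- Pure jump growth (PJG) excursion: `f(t) = ∑_{r ⪯_f t} x_r^t(f)` on `[0,1]`. -/
def IsPJG (f : ℝ → ℝ) : Prop := ∀ t ∈ Icc (0:ℝ) 1, f t = Jop f t

/-- An increasing bijection from `[0,1]` onto itself. -/
def IncBij (l : ℝ → ℝ) : Prop :=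
  StrictMonoOn l (Icc (0:ℝ) 1) ∧ Set.BijOn l (Icc (0:ℝ) 1) (Icc (0:ℝ) 1)

/-- The Skorokhod distance `ρ` on functions `[0,1] → ℝ`. -/
def skor (f g : ℝ → ℝ) : ℝ :=
  sInf {c : ℝ | 0 ≤ c ∧ ∃ l : ℝ → ℝ, IncBij l ∧
    ∀ x ∈ Icc (0:ℝ) 1, |l x - x| ≤ c ∧ |f x - g (l x)| ≤ c}

namespace ExcAux

variable {f : ℝ → ℝ}

lemma fnn (hf : IsExcursion f) (x : ℝ) : 0 ≤ f x := by
  by_cases hx : x ∈ Icc (0:ℝ) 1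
  · exact hf.nonneg x hx
  · rw [hf.zero_outside x hx]

lemma bddB (hf : IsExcursion f) (s t : ℝ) : BddBelow (f '' Icc s t) :=
  ⟨0, by rintro y ⟨u, -, rfl⟩; exact fnn hf u⟩

lemma infIcc_nonneg (hf : IsExcursion f) (s t : ℝ) : 0 ≤ infIcc f s t :=
  Real.sInf_nonneg (by rintro y ⟨u, -, rfl⟩; exact fnn hf u)

lemma infIcc_le (hf : IsExcursion f) {s u t : ℝ} (h1 : s ≤ u) (h2 : u ≤ t) :
    infIcc f s t ≤ f u :=
  csInf_le (bddB hf s t) ⟨u, ⟨h1, h2⟩, rfl⟩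

lemma le_infIcc {s t c : ℝ} (hst : s ≤ t) (h : ∀ u, s ≤ u → u ≤ t → c ≤ f u) :
    c ≤ infIcc f s t :=
  le_csInf ⟨f s, ⟨s, ⟨le_rfl, hst⟩, rfl⟩⟩ (by rintro y ⟨u, hu, rfl⟩; exact h u hu.1 hu.2)

lemma infIcc_anti (hf : IsExcursion f) {s' s t t' : ℝ} (hs : s' ≤ s) (ht : t ≤ t')
    (hst : s ≤ t) : infIcc f s' t' ≤ infIcc f s t :=
  csInf_le_csInf (bddB hf s' t') ⟨f s, s, ⟨le_rfl, hst⟩, rfl⟩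
    (image_subset_iff.mpr fun x hx => mem_image_of_mem f (Icc_subset_Icc hs ht hx))

lemma infIcc_self (f : ℝ → ℝ) (t : ℝ) : infIcc f t t = f t := by
  rw [infIcc, Icc_self, image_singleton, csInf_singleton]

lemma infIcc_split (hf : IsExcursion f) {s b t : ℝ} (h1 : s ≤ b) (h2 : b ≤ t) :
    infIcc f s t = min (infIcc f s b) (infIcc f b t) := by
  apply le_antisymm
  · exact le_min (infIcc_anti hf le_rfl h2 h1) (infIcc_anti hf h1 le_rfl h2)
  · apply le_infIcc (h1.trans h2)
    intro u hu1 hu2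
    rcases le_total u b with h | h
    · exact (min_le_left _ _).trans (infIcc_le hf hu1 h)
    · exact (min_le_right _ _).trans (infIcc_le hf h hu2)

lemma lm_ge (hf : IsExcursion f) {a b t : ℝ} (ha : 0 ≤ a) (hb1 : b ≤ 1)
    (hab : a < b) (hbt : b ≤ t) : infIcc f a t ≤ lm f b := by
  have hb0 : 0 < b := lt_of_le_of_lt ha hab
  have hlim := hf.leftLimEx b ⟨hb0, hb1⟩
  rw [lm, if_neg hb0.ne']
  refine ge_of_tendsto hlim ?_
  filter_upwards [Ioo_mem_nhdsLT_of_mem (⟨hab, le_rfl⟩ : b ∈ Ioc a b)] with v hv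
  exact infIcc_le hf hv.1.le (hv.2.le.trans hbt)

lemma lm_le_self (hf : IsExcursion f) {t : ℝ} (ht : t ∈ Icc (0:ℝ) 1) : lm f t ≤ f t := by
  have := hf.jump_nonneg t ht
  rw [jump, sub_nonneg] at this
  exact this

lemma pre_refl (hf : IsExcursion f) {t : ℝ} (ht : t ∈ Icc (0:ℝ) 1) : pre f t t := by
  refine ⟨le_rfl, ?_⟩
  rw [infIcc_self]
  exact lm_le_self hf ht

lemma pre_trans (hf : IsExcursion f) {a b c : ℝ} (ha : 0 ≤ a) (hc : c ≤ 1)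
    (h1 : pre f a b) (h2 : pre f b c) : pre f a c := by
  rcases eq_or_lt_of_le h1.1 with rfl | hab
  · exact h2
  refine ⟨h1.1.trans h2.1, ?_⟩
  rw [infIcc_split hf h1.1 h2.1, le_min_iff]
  refine ⟨h1.2, ?_⟩
  calc lm f a ≤ infIcc f a b := h1.2
    _ ≤ lm f b := lm_ge hf ha (h2.1.trans hc) hab le_rfl
    _ ≤ infIcc f b c := h2.2

lemma pre_comp (hf : IsExcursion f) {a b c : ℝ} (h1 : pre f a c) (h2 : pre f b c)
    (hab : a ≤ b) : pre f a b :=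
  ⟨hab, h1.2.trans (infIcc_anti hf le_rfl h2.1 hab)⟩

lemma xst_nonneg (f : ℝ → ℝ) (s t : ℝ) : 0 ≤ xst f s t := by
  rw [xst]; split
  · exact le_max_right _ _
  · exact le_rfl

lemma xst_le_jump (hf : IsExcursion f) {m t : ℝ} (hm : m ∈ Icc (0:ℝ) 1) (hmt : m ≤ t) :
    xst f m t ≤ jump f m := by
  rw [xst, if_pos hmt]
  have h1 : infIcc f m t ≤ f m := infIcc_le hf le_rfl hmt
  have h2 := hf.jump_nonneg m hm
  rw [jump] at h2 ⊢
  exact max_le (by linarith) (by linarith)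

lemma xst_eq_of_pre {m t : ℝ} (h : pre f m t) : xst f m t = infIcc f m t - lm f m := by
  rw [xst, if_pos h.1, max_eq_left (by linarith [h.2])]

lemma xst_self (hf : IsExcursion f) {t : ℝ} (ht : t ∈ Icc (0:ℝ) 1) :
    xst f t t = jump f t := by
  have := hf.jump_nonneg t ht
  rw [jump] at this ⊢
  rw [xst, if_pos le_rfl, infIcc_self, max_eq_left (by linarith)]

lemma infIcc_stable (hf : IsExcursion f) {r b c : ℝ} (hr : 0 ≤ r) (hrb : r < b)
    (hbc : pre f b c) (hc1 : c ≤ 1) : infIcc f r c = infIcc f r b := by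
  have hb1 : b ≤ 1 := hbc.1.trans hc1
  rw [infIcc_split hf hrb.le hbc.1, min_eq_left]
  exact (lm_ge hf hr hb1 hrb le_rfl).trans hbc.2

lemma xst_stable (hf : IsExcursion f) {r b c : ℝ} (hr : 0 ≤ r) (hrb : r < b)
    (hbc : pre f b c) (hc1 : c ≤ 1) : xst f r c = xst f r b := by
  rw [xst, xst, if_pos (hrb.le.trans hbc.1), if_pos hrb.le,
    infIcc_stable hf hr hrb hbc hc1]

end ExcAux
namespace ExcAux

variable {f : ℝ → ℝ}

lemma cdel_symm (f : ℝ → ℝ) (t a b : ℝ) : cdel f t a b = cdel f t b a := by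
  rw [cdel, cdel, abs_sub_comm]

lemma cdel_self {t : ℝ} (hj : 0 ≤ jump f t) (a : ℝ) : cdel f t a a = 0 := by
  rw [cdel, sub_self, abs_zero, sub_zero, min_eq_left hj]

lemma cdel_nonneg {t a b : ℝ} (h : |a - b| ≤ jump f t) : 0 ≤ cdel f t a b :=
  le_min (abs_nonneg _) (by linarith)

lemma circle_tri {Δ a b c : ℝ} (ha : 0 ≤ a) (haΔ : a ≤ Δ) (hb : 0 ≤ b) (hbΔ : b ≤ Δ)
    (hc : 0 ≤ c) (hcΔ : c ≤ Δ) :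
    min |a - c| (Δ - |a - c|) ≤ min |a - b| (Δ - |a - b|) + min |b - c| (Δ - |b - c|) := by
  have key : |a - c| + |a - b| + |b - c| ≤ 2 * Δ := by
    rcases abs_cases (a - c) with ⟨h3, h3'⟩ | ⟨h3, h3'⟩ <;>
      rcases abs_cases (a - b) with ⟨h1, h1'⟩ | ⟨h1, h1'⟩ <;>
      rcases abs_cases (b - c) with ⟨h2, h2'⟩ | ⟨h2, h2'⟩ <;> linarith
  rcases le_total |a - b| (Δ - |a - b|) with h1 | h1 <;>
    rcases le_total |b - c| (Δ - |b - c|) with h2 | h2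
  · rw [min_eq_left h1, min_eq_left h2]
    exact (min_le_left _ _).trans (abs_sub_le a b c)
  · rw [min_eq_left h1, min_eq_right h2]
    refine (min_le_right _ _).trans ?_
    have h4 : |b - c| ≤ |b - a| + |a - c| := abs_sub_le b a c
    have h5 : |b - a| = |a - b| := abs_sub_comm b a
    linarith
  · rw [min_eq_right h1, min_eq_left h2]
    refine (min_le_right _ _).trans ?_
    have h4 : |a - b| ≤ |a - c| + |c - b| := abs_sub_le a c b
    have h5 : |c - b| = |b - c| := abs_sub_comm c b
    linarith
  · rw [min_eq_right h1, min_eq_right h2]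
    refine (min_le_left _ _).trans ?_
    linarith

lemma cdel_zero_le (hf : IsExcursion f) {r t : ℝ} (hr : r ∈ Icc (0:ℝ) 1) (hrt : r ≤ t) :
    0 ≤ cdel f r 0 (xst f r t) ∧ cdel f r 0 (xst f r t) ≤ xst f r t := by
  have h0 := xst_nonneg f r t
  have h1 := xst_le_jump hf hr hrt
  have habs : |0 - xst f r t| = xst f r t := by
    rw [zero_sub, abs_neg, abs_of_nonneg h0]
  constructor
  · apply cdel_nonneg
    rw [habs]
    exact h1
  · exact (min_le_left _ _).trans habs.le

lemma finsum_bound (hf : IsExcursion f) {t : ℝ} (ht1 : t ≤ 1) :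
    ∀ n (F : Finset ℝ), F.card ≤ n → ∀ a : ℝ, 0 ≤ a → a ≤ t →
      (∀ r ∈ F, a < r ∧ pre f r t) → ∑ r ∈ F, xst f r t ≤ f t - infIcc f a t := by
  intro n
  induction n with
  | zero =>
    intro F hF a ha hat _
    have hFe : F = ∅ := Finset.card_eq_zero.mp (Nat.le_zero.mp hF)
    subst hFe
    simp only [Finset.sum_empty]
    linarith [infIcc_le hf hat (le_refl t)]
  | succ n ih =>
    intro F hF a ha hat hFr
    rcases F.eq_empty_or_nonempty with rfl | hne
    · simp only [Finset.sum_empty]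
      linarith [infIcc_le hf hat (le_refl t)]
    · set m0 := F.min' hne with hm0def
      have hm0 := hFr m0 (F.min'_mem hne)
      have hx : xst f m0 t ≤ infIcc f m0 t - infIcc f a t := by
        have h1 : infIcc f a t ≤ lm f m0 :=
          lm_ge hf ha ((hm0.2.1).trans ht1) hm0.1 hm0.2.1
        have h2 : infIcc f a t ≤ infIcc f m0 t :=
          infIcc_anti hf (le_of_lt hm0.1) le_rfl hm0.2.1
        rw [xst, if_pos hm0.2.1]
        exact max_le (by linarith) (by linarith)
      have hrest : ∑ r ∈ F.erase m0, xst f r t ≤ f t - infIcc f m0 t := by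
        refine ih (F.erase m0) ?_ m0 (ha.trans hm0.1.le) hm0.2.1 ?_
        · rw [Finset.card_erase_of_mem (F.min'_mem hne)]
          omega
        · intro r hr
          have hrF := Finset.mem_of_mem_erase hr
          exact ⟨lt_of_le_of_ne (F.min'_le r hrF) (Finset.ne_of_mem_erase hr).symm,
            (hFr r hrF).2⟩
      have hsplit : ∑ r ∈ F, xst f r t = xst f m0 t + ∑ r ∈ F.erase m0, xst f r t :=
        (Finset.add_sum_erase F _ (F.min'_mem hne)).symm
      linarith

lemma master_sum_le (hf : IsExcursion f) {a t : ℝ} (ha : 0 ≤ a) (hat : a ≤ t) (ht1 : t ≤ 1)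
    (u : Finset ℝ) :
    ∑ r ∈ u, (if pre f a r ∧ a < r ∧ pre f r t then xst f r t else 0)
      ≤ f t - infIcc f a t := by
  rw [← Finset.sum_filter]
  exact finsum_bound hf ht1 (u.filter _).card _ le_rfl a ha hat
    (fun r hr => ⟨((Finset.mem_filter.mp hr).2).2.1, ((Finset.mem_filter.mp hr).2).2.2⟩)

lemma master_summand_nonneg (f : ℝ → ℝ) (a t : ℝ) :
    0 ≤ fun r => (if pre f a r ∧ a < r ∧ pre f r t then xst f r t else 0) := by
  intro r
  dsimp only
  split
  · exact xst_nonneg f r t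
  · exact le_rfl

lemma master_summable (hf : IsExcursion f) {a t : ℝ} (ha : 0 ≤ a) (hat : a ≤ t) (ht1 : t ≤ 1) :
    Summable (fun r => if pre f a r ∧ a < r ∧ pre f r t then xst f r t else 0) :=
  summable_of_sum_le (master_summand_nonneg f a t) (master_sum_le hf ha hat ht1)

lemma master_tsum_le (hf : IsExcursion f) {a t : ℝ} (ha : 0 ≤ a) (hat : a ≤ t) (ht1 : t ≤ 1) :
    (∑' r : ℝ, if pre f a r ∧ a < r ∧ pre f r t then xst f r t else 0)
      ≤ f t - infIcc f a t :=
  Summable.tsum_le_of_sum_le (master_summable hf ha hat ht1) (master_sum_le hf ha hat ht1)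

end ExcAux
namespace ExcAux

variable {f : ℝ → ℝ}

lemma summable_dom (hf : IsExcursion f) {a t : ℝ} (ha : 0 ≤ a) (hat : a ≤ t) (ht1 : t ≤ 1)
    {g : ℝ → ℝ} (h0 : ∀ r, 0 ≤ g r)
    (hle : ∀ r, g r ≤ if pre f a r ∧ a < r ∧ pre f r t then xst f r t else 0) :
    Summable g :=
  summable_of_sum_le h0
    (fun u => (Finset.sum_le_sum fun i _ => hle i).trans (master_sum_le hf ha hat ht1 u))

lemma tsum_split (hf : IsExcursion f) {a b c : ℝ} (ha : 0 ≤ a) (hab : a < b)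
    (hpab : pre f a b) (hpbc : pre f b c) (hc1 : c ≤ 1) (u : ℝ → ℝ → ℝ)
    (hu : ∀ r t', r ∈ Icc (0:ℝ) 1 → r ≤ t' →
      0 ≤ u r (xst f r t') ∧ u r (xst f r t') ≤ xst f r t') :
    (∑' r : ℝ, if pre f a r ∧ a < r ∧ pre f r c then u r (xst f r c) else 0)
      = ((∑' r : ℝ, if pre f a r ∧ a < r ∧ pre f r b then u r (xst f r b) else 0)
          - u b (xst f b b)) + u b (xst f b c)
        + ∑' r : ℝ, if pre f b r ∧ b < r ∧ pre f r c then u r (xst f r c) else 0 := by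
  have hb0 : 0 < b := lt_of_le_of_lt ha hab
  have hb1 : b ≤ 1 := hpbc.1.trans hc1
  have hbI : b ∈ Icc (0:ℝ) 1 := ⟨hb0.le, hb1⟩
  have hbc : b ≤ c := hpbc.1
  have hprb : pre f b b := pre_refl hf hbI
  have hpac : pre f a c := pre_trans hf ha hc1 hpab hpbc
  have hrIc : ∀ r : ℝ, a < r → pre f r c → r ∈ Icc (0:ℝ) 1 :=
    fun r h1 h2 => ⟨le_of_lt (lt_of_le_of_lt ha h1), h2.1.trans hc1⟩
  have hrIb : ∀ r : ℝ, a < r → pre f r b → r ∈ Icc (0:ℝ) 1 :=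
    fun r h1 h2 => ⟨le_of_lt (lt_of_le_of_lt ha h1), h2.1.trans hb1⟩
  have hrIb2 : ∀ r : ℝ, b < r → pre f r c → r ∈ Icc (0:ℝ) 1 :=
    fun r h1 h2 => ⟨le_of_lt (lt_of_le_of_lt hb0.le h1), h2.1.trans hc1⟩
  -- pieces
  have hAnn : ∀ r, 0 ≤ (if (pre f a r ∧ a < r ∧ pre f r c) ∧ r ≤ b then u r (xst f r c) else 0) := by
    intro r; split
    · next h => exact (hu r c (hrIc r h.1.2.1 h.1.2.2) h.1.2.2.1).1
    · exact le_rfl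
  have hBnn : ∀ r, 0 ≤ (if (pre f a r ∧ a < r ∧ pre f r c) ∧ b < r then u r (xst f r c) else 0) := by
    intro r; split
    · next h => exact (hu r c (hrIc r h.1.2.1 h.1.2.2) h.1.2.2.1).1
    · exact le_rfl
  have SA : Summable (fun r => if (pre f a r ∧ a < r ∧ pre f r c) ∧ r ≤ b then u r (xst f r c) else 0) := by
    refine summable_dom hf ha (hab.le.trans hbc) hc1 hAnn (fun r => ?_)
    by_cases h : (pre f a r ∧ a < r ∧ pre f r c) ∧ r ≤ b
    · rw [if_pos h, if_pos h.1]
      exact (hu r c (hrIc r h.1.2.1 h.1.2.2) h.1.2.2.1).2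
    · rw [if_neg h]
      split
      · next h2 => exact xst_nonneg f r c
      · exact le_rfl
  have SB : Summable (fun r => if (pre f a r ∧ a < r ∧ pre f r c) ∧ b < r then u r (xst f r c) else 0) := by
    refine summable_dom hf ha (hab.le.trans hbc) hc1 hBnn (fun r => ?_)
    by_cases h : (pre f a r ∧ a < r ∧ pre f r c) ∧ b < r
    · rw [if_pos h, if_pos h.1]
      exact (hu r c (hrIc r h.1.2.1 h.1.2.2) h.1.2.2.1).2
    · rw [if_neg h]
      split
      · next h2 => exact xst_nonneg f r c
      · exact le_rfl
  have S1 : Summable (fun r => if pre f a r ∧ a < r ∧ pre f r b then u r (xst f r b) else 0) := by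
    refine summable_dom hf ha hab.le hb1 (fun r => ?_) (fun r => ?_)
    · split
      · next h => exact (hu r b (hrIb r h.2.1 h.2.2) h.2.2.1).1
      · exact le_rfl
    · by_cases h : pre f a r ∧ a < r ∧ pre f r b
      · rw [if_pos h, if_pos h]
        exact (hu r b (hrIb r h.2.1 h.2.2) h.2.2.1).2
      · rw [if_neg h, if_neg h]
  have S2 : Summable (fun r => if pre f b r ∧ b < r ∧ pre f r c then u r (xst f r c) else 0) := by
    refine summable_dom hf hb0.le hbc hc1 (fun r => ?_) (fun r => ?_)
    · split
      · next h => exact (hu r c (hrIb2 r h.2.1 h.2.2) h.2.2.1).1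
      · exact le_rfl
    · by_cases h : pre f b r ∧ b < r ∧ pre f r c
      · rw [if_pos h, if_pos h]
        exact (hu r c (hrIb2 r h.2.1 h.2.2) h.2.2.1).2
      · rw [if_neg h, if_neg h]
  -- pointwise decomposition
  have h_add : ∀ r : ℝ, (if pre f a r ∧ a < r ∧ pre f r c then u r (xst f r c) else 0)
      = (if (pre f a r ∧ a < r ∧ pre f r c) ∧ r ≤ b then u r (xst f r c) else 0)
        + (if (pre f a r ∧ a < r ∧ pre f r c) ∧ b < r then u r (xst f r c) else 0) := by
    intro r
    by_cases h : pre f a r ∧ a < r ∧ pre f r c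
    · rcases le_or_gt r b with h' | h'
      · rw [if_pos h, if_pos ⟨h, h'⟩, if_neg (fun hx => absurd hx.2 (not_lt.mpr h')), add_zero]
      · rw [if_pos h, if_neg (fun hx => absurd hx.2 (not_le.mpr h')), if_pos ⟨h, h'⟩, zero_add]
    · rw [if_neg h, if_neg (fun hx => h hx.1), if_neg (fun hx => h hx.1), add_zero]
  have hBeq : ∀ r : ℝ, (if (pre f a r ∧ a < r ∧ pre f r c) ∧ b < r then u r (xst f r c) else 0)
      = (if pre f b r ∧ b < r ∧ pre f r c then u r (xst f r c) else 0) := by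
    intro r
    refine if_congr ⟨?_, ?_⟩ rfl rfl
    · rintro ⟨⟨h1, h2, h3⟩, h4⟩
      exact ⟨pre_comp hf hpbc h3 h4.le, h4, h3⟩
    · rintro ⟨h1, h2, h3⟩
      exact ⟨⟨pre_trans hf ha (h3.1.trans hc1) hpab h1, hab.trans h2, h3⟩, h2⟩
  have hAeq : ∀ r : ℝ, (if (pre f a r ∧ a < r ∧ pre f r c) ∧ r ≤ b then u r (xst f r c) else 0)
      = if r = b then u b (xst f b c)
        else (if pre f a r ∧ a < r ∧ pre f r b then u r (xst f r b) else 0) := by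
    intro r
    by_cases hr : r = b
    · subst hr
      rw [if_pos rfl, if_pos ⟨⟨hpab, hab, hpbc⟩, le_rfl⟩]
    · rw [if_neg hr]
      rcases lt_or_gt_of_ne hr with h' | h'
      · by_cases hPB : pre f a r ∧ a < r ∧ pre f r b
        · have hr0 : 0 ≤ r := le_of_lt (lt_of_le_of_lt ha hPB.2.1)
          have hPCr : (pre f a r ∧ a < r ∧ pre f r c) ∧ r ≤ b :=
            ⟨⟨hPB.1, hPB.2.1, pre_trans hf hr0 hc1 hPB.2.2 hpbc⟩, h'.le⟩
          rw [if_pos hPCr, if_pos hPB, xst_stable hf hr0 h' hpbc hc1]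
        · rw [if_neg hPB, if_neg ?_]
          rintro ⟨⟨h1, h2, h3⟩, h4⟩
          exact hPB ⟨h1, h2, pre_comp hf h3 hpbc h4⟩
      · rw [if_neg (fun hx => absurd hx.2 (not_le.mpr h')),
          if_neg (fun hx : pre f a r ∧ a < r ∧ pre f r b =>
            absurd hx.2.2.1 (not_le.mpr h'))]
  -- assemble
  have step1 : (∑' r : ℝ, if pre f a r ∧ a < r ∧ pre f r c then u r (xst f r c) else 0)
      = (∑' r : ℝ, if (pre f a r ∧ a < r ∧ pre f r c) ∧ r ≤ b then u r (xst f r c) else 0)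
        + ∑' r : ℝ, if (pre f a r ∧ a < r ∧ pre f r c) ∧ b < r then u r (xst f r c) else 0 := by
    rw [← Summable.tsum_add SA SB]
    exact tsum_congr h_add
  have step2 : (∑' r : ℝ, if (pre f a r ∧ a < r ∧ pre f r c) ∧ b < r then u r (xst f r c) else 0)
      = ∑' r : ℝ, if pre f b r ∧ b < r ∧ pre f r c then u r (xst f r c) else 0 :=
    tsum_congr hBeq
  have SA' : Summable (fun r : ℝ => if r = b then u b (xst f b c)
      else (if pre f a r ∧ a < r ∧ pre f r b then u r (xst f r b) else 0)) := by
    have := SA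
    rwa [funext hAeq] at this
  have step3 : (∑' r : ℝ, if (pre f a r ∧ a < r ∧ pre f r c) ∧ r ≤ b then u r (xst f r c) else 0)
      = (∑' r : ℝ, if pre f a r ∧ a < r ∧ pre f r b then u r (xst f r b) else 0)
        - u b (xst f b b) + u b (xst f b c) := by
    rw [tsum_congr hAeq]
    rw [Summable.tsum_eq_add_tsum_ite SA' b, Summable.tsum_eq_add_tsum_ite S1 b]
    have htail : ∀ r : ℝ, (if r = b then (0:ℝ) else
        (if r = b then u b (xst f b c)
          else (if pre f a r ∧ a < r ∧ pre f r b then u r (xst f r b) else 0)))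
        = (if r = b then 0 else (if pre f a r ∧ a < r ∧ pre f r b then u r (xst f r b) else 0)) := by
      intro r
      by_cases hr : r = b
      · rw [if_pos hr, if_pos hr]
      · rw [if_neg hr, if_neg hr, if_neg hr]
    rw [tsum_congr htail, if_pos rfl, if_pos ⟨hpab, hab, hprb⟩]
    ring
  rw [step1, step2, step3]

lemma dO_split (hf : IsExcursion f) {a b c : ℝ} (ha : 0 ≤ a) (hab : a < b)
    (hpab : pre f a b) (hpbc : pre f b c) (hc1 : c ≤ 1) :
    dO f a c = dO f a b + cdel f b 0 (xst f b c) + dO f b c := by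
  have hbI : b ∈ Icc (0:ℝ) 1 := ⟨ha.trans hab.le, hpbc.1.trans hc1⟩
  have hj := hf.jump_nonneg b hbI
  have h : dO f a c = (dO f a b - cdel f b 0 (xst f b b)) + cdel f b 0 (xst f b c) + dO f b c :=
    tsum_split hf ha hab hpab hpbc hc1 (fun r x => cdel f r 0 x)
      (fun r t' hr hrt => cdel_zero_le hf hr hrt)
  have hz : cdel f b 0 (xst f b b) = 0 := by
    rw [xst_self hf hbI, cdel, zero_sub, abs_neg, abs_of_nonneg hj, sub_self,
      min_eq_right hj]
  rw [h, hz]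
  ring

lemma dTanc_split (hf : IsExcursion f) {a b c : ℝ} (ha : 0 ≤ a) (hab : a < b)
    (hpab : pre f a b) (hpbc : pre f b c) (hc1 : c ≤ 1) :
    dTanc f a c = dTanc f a b + dTanc f b c := by
  have hbI : b ∈ Icc (0:ℝ) 1 := ⟨ha.trans hab.le, hpbc.1.trans hc1⟩
  have h : (∑' r : ℝ, if pre f a r ∧ a < r ∧ pre f r c then xst f r c else 0)
      = ((∑' r : ℝ, if pre f a r ∧ a < r ∧ pre f r b then xst f r b else 0)
          - xst f b b) + xst f b c
        + ∑' r : ℝ, if pre f b r ∧ b < r ∧ pre f r c then xst f r c else 0 :=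
    tsum_split hf ha hab hpab hpbc hc1 (fun _ x => x)
      (fun r t' _ _ => ⟨xst_nonneg f r t', le_rfl⟩)
  simp only [dTanc]
  rw [h, xst_self hf hbI, xst_eq_of_pre hpbc,
    infIcc_stable hf ha hab hpbc hc1, jump]
  ring

lemma dTanc_self (f : ℝ → ℝ) (t : ℝ) : dTanc f t t = 0 := by
  simp only [dTanc, infIcc_self]
  have h : ∀ r : ℝ, (if pre f t r ∧ t < r ∧ pre f r t then xst f r t else 0) = 0 :=
    fun r => if_neg (fun h => absurd h.2.2.1 (not_le.mpr h.2.1))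
  rw [tsum_congr h, tsum_zero]
  ring

lemma dO_self (f : ℝ → ℝ) (t : ℝ) : dO f t t = 0 := by
  simp only [dO]
  have h : ∀ r : ℝ, (if pre f t r ∧ t < r ∧ pre f r t then cdel f r 0 (xst f r t) else 0) = 0 :=
    fun r => if_neg (fun h => absurd h.2.2.1 (not_le.mpr h.2.1))
  rw [tsum_congr h, tsum_zero]

lemma dO_nonneg (hf : IsExcursion f) {a t : ℝ} (ha : 0 ≤ a) (ht1 : t ≤ 1) :
    0 ≤ dO f a t := by
  simp only [dO]
  refine tsum_nonneg (fun r => ?_)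
  by_cases h : pre f a r ∧ a < r ∧ pre f r t
  · rw [if_pos h]
    exact (cdel_zero_le hf ⟨le_of_lt (lt_of_le_of_lt ha h.2.1), h.2.2.1.trans ht1⟩ h.2.2.1).1
  · rw [if_neg h]

lemma dTanc_nonneg (hf : IsExcursion f) {a t : ℝ} (ha : 0 ≤ a) (hpat : pre f a t)
    (ht1 : t ≤ 1) : 0 ≤ dTanc f a t := by
  have := master_tsum_le hf ha hpat.1 ht1
  simp only [dTanc]
  linarith

end ExcAux
namespace ExcAux

variable {f : ℝ → ℝ}

lemma zero_pre (hf : IsExcursion f) {s : ℝ} (hs : 0 ≤ s) : pre f 0 s := by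
  refine ⟨hs, ?_⟩
  rw [lm, if_pos rfl]
  exact infIcc_nonneg hf 0 s

lemma sup_pre (hf : IsExcursion f) {s : ℝ} (hs1 : s ≤ 1) (B : Set ℝ) (hB : B.Nonempty)
    (hBel : ∀ r ∈ B, 0 ≤ r ∧ pre f r s) : pre f (sSup B) s := by
  have hbdd : BddAbove B := ⟨s, fun r hr => (hBel r hr).2.1⟩
  obtain ⟨r0, hr0⟩ := hB
  have hm0 : 0 ≤ sSup B := le_trans (hBel r0 hr0).1 (le_csSup hbdd hr0)
  have hms : sSup B ≤ s := csSup_le ⟨r0, hr0⟩ (fun r hr => (hBel r hr).2.1)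
  by_cases hmem : sSup B ∈ B
  · exact (hBel _ hmem).2
  refine ⟨hms, ?_⟩
  rcases eq_or_lt_of_le hm0 with h0 | h0
  · have hr00 : r0 = sSup B := le_antisymm (le_csSup hbdd hr0) (h0 ▸ (hBel r0 hr0).1)
    exact absurd (hr00 ▸ hr0) hmem
  · rw [lm, if_neg (ne_of_gt h0)]
    have hm1 : sSup B ≤ 1 := hms.trans hs1
    have hlim := hf.leftLimEx (sSup B) ⟨h0, hm1⟩
    set m := sSup B with hmdef
    set L := Function.leftLim f m with hLdef
    -- suffices : ∀ ε > 0, L ≤ infIcc f m s + ε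
    have key : ∀ ε : ℝ, 0 < ε → L ≤ infIcc f m s + ε := by
      intro ε hε
      have hev : {v : ℝ | L - ε < f v} ∈ 𝓝[<] m :=
        hlim (Ioi_mem_nhds (by linarith : L - ε < L))
      rcases mem_nhdsLT_iff_exists_Ioo_subset.mp hev with ⟨l, hl, hsub⟩
      have hl2m : max l (m / 2) < m := max_lt hl (by linarith)
      obtain ⟨r, hrB, hrgt⟩ := exists_lt_of_lt_csSup ⟨r0, hr0⟩ hl2m
      have hrm : r < m := lt_of_le_of_ne (le_csSup hbdd hrB) (fun h => hmem (h ▸ hrB))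
      have hr0' : 0 < r := lt_of_le_of_lt (by positivity) (lt_of_le_of_lt (le_max_right l (m/2)) hrgt)
      have hrl : l < r := lt_of_le_of_lt (le_max_left l (m/2)) hrgt
      have hrlim := hf.leftLimEx r ⟨hr0', hrm.le.trans hm1⟩
      have h1 : L - ε ≤ Function.leftLim f r := by
        refine ge_of_tendsto hrlim ?_
        filter_upwards [Ioo_mem_nhdsLT_of_mem (⟨hrl, le_rfl⟩ : r ∈ Ioc l r)] with v hv
        exact (hsub ⟨hv.1, hv.2.trans hrm⟩).le
      have h2 : lm f r ≤ infIcc f r s := ((hBel r hrB).2).2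
      rw [lm, if_neg (ne_of_gt hr0')] at h2
      have h3 : infIcc f r s ≤ infIcc f m s := infIcc_anti hf hrm.le le_rfl hms
      linarith
    by_contra hcon
    push_neg at hcon
    have := key ((L - infIcc f m s) / 2) (by linarith)
    linarith

lemma mrca_bdd (f : ℝ → ℝ) (s t : ℝ) :
    BddAbove {r : ℝ | 0 ≤ r ∧ pre f r s ∧ pre f r t} :=
  ⟨s, fun r hr => hr.2.1.1⟩

lemma mrca_ge (hf : IsExcursion f) {s t r : ℝ} (h0 : 0 ≤ r) (h1 : pre f r s)
    (h2 : pre f r t) : r ≤ mrca f s t :=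
  le_csSup (mrca_bdd f s t) ⟨h0, h1, h2⟩

lemma mrca_spec (hf : IsExcursion f) {s t : ℝ} (hs : s ∈ Icc (0:ℝ) 1)
    (ht : t ∈ Icc (0:ℝ) 1) :
    0 ≤ mrca f s t ∧ pre f (mrca f s t) s ∧ pre f (mrca f s t) t := by
  have hB : {r : ℝ | 0 ≤ r ∧ pre f r s ∧ pre f r t}.Nonempty :=
    ⟨0, le_rfl, zero_pre hf hs.1, zero_pre hf ht.1⟩
  obtain ⟨r0, hr0⟩ := hB
  refine ⟨le_trans hr0.1 (le_csSup (mrca_bdd f s t) hr0), ?_, ?_⟩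
  · exact sup_pre hf hs.2 _ ⟨r0, hr0⟩ (fun r hr => ⟨hr.1, hr.2.1⟩)
  · exact sup_pre hf ht.2 _ ⟨r0, hr0⟩ (fun r hr => ⟨hr.1, hr.2.2⟩)

lemma mrca_comm (f : ℝ → ℝ) (s t : ℝ) : mrca f s t = mrca f t s := by
  rw [mrca, mrca]
  congr 1
  ext r
  simp only [mem_setOf_eq]
  tauto

lemma mrca_self (hf : IsExcursion f) {t : ℝ} (ht : t ∈ Icc (0:ℝ) 1) : mrca f t t = t := by
  refine le_antisymm (csSup_le ⟨t, ht.1, pre_refl hf ht, pre_refl hf ht⟩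
    (fun r hr => hr.2.1.1)) ?_
  exact mrca_ge hf ht.1 (pre_refl hf ht) (pre_refl hf ht)

lemma mrca_le_left (hf : IsExcursion f) {s t : ℝ} (hs : s ∈ Icc (0:ℝ) 1)
    (ht : t ∈ Icc (0:ℝ) 1) : mrca f s t ≤ s :=
  (mrca_spec hf hs ht).2.1.1

/-- If `s ∧ t < t ∧ u`, then `s ∧ u = s ∧ t`. -/
lemma mrca_eq_left (hf : IsExcursion f) {s t u : ℝ} (hs : s ∈ Icc (0:ℝ) 1)
    (ht : t ∈ Icc (0:ℝ) 1) (hu : u ∈ Icc (0:ℝ) 1)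
    (hlt : mrca f s t < mrca f t u) : mrca f s u = mrca f s t := by
  obtain ⟨h10, h1s, h1t⟩ := mrca_spec hf hs ht
  obtain ⟨h20, h2t, h2u⟩ := mrca_spec hf ht hu
  have h12 : pre f (mrca f s t) (mrca f t u) := pre_comp hf h1t h2t hlt.le
  have h1u : pre f (mrca f s t) u := pre_trans hf h10 hu.2 h12 h2u
  refine le_antisymm (csSup_le ⟨0, le_rfl, zero_pre hf hs.1, zero_pre hf hu.1⟩ ?_)
    (mrca_ge hf h10 h1s h1u)
  rintro r ⟨hr0, hrs, hru⟩
  rcases le_total r (mrca f t u) with hcmp | hcmp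
  · have hrm2 : pre f r (mrca f t u) := pre_comp hf hru h2u hcmp
    have hrt : pre f r t := pre_trans hf hr0 ht.2 hrm2 h2t
    exact mrca_ge hf hr0 hrs hrt
  · exfalso
    have hm2r : pre f (mrca f t u) r := pre_comp hf h2u hru hcmp
    have hm2s : pre f (mrca f t u) s := pre_trans hf h20 hs.2 hm2r hrs
    have : mrca f t u ≤ mrca f s t := mrca_ge hf h20 hm2s h2t
    linarith

end ExcAux
namespace ExcAux

variable {f : ℝ → ℝ}

lemma xst_bounds (hf : IsExcursion f) {m t : ℝ} (hm : m ∈ Icc (0:ℝ) 1) (hmt : m ≤ t) :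
    0 ≤ xst f m t ∧ xst f m t ≤ jump f m :=
  ⟨xst_nonneg f m t, xst_le_jump hf hm hmt⟩

lemma dL_nonneg (hf : IsExcursion f) {s t : ℝ} (hs : s ∈ Icc (0:ℝ) 1)
    (ht : t ∈ Icc (0:ℝ) 1) : 0 ≤ dL f s t := by
  obtain ⟨h0, h1, h2⟩ := mrca_spec hf hs ht
  have hmI : mrca f s t ∈ Icc (0:ℝ) 1 := ⟨h0, h1.1.trans hs.2⟩
  have hx1 := xst_bounds hf hmI h1.1
  have hx2 := xst_bounds hf hmI h2.1
  have hc : 0 ≤ cdel f (mrca f s t) (xst f (mrca f s t) s) (xst f (mrca f s t) t) :=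
    cdel_nonneg (abs_le.mpr ⟨by linarith [hx1.1, hx2.2], by linarith [hx1.2, hx2.1]⟩)
  have hd1 := dO_nonneg hf h0 hs.2
  have hd2 := dO_nonneg hf h0 ht.2
  simp only [dL]
  linarith

lemma dT_nonneg (hf : IsExcursion f) {s t : ℝ} (hs : s ∈ Icc (0:ℝ) 1)
    (ht : t ∈ Icc (0:ℝ) 1) : 0 ≤ dT f s t := by
  obtain ⟨h0, h1, h2⟩ := mrca_spec hf hs ht
  have hd1 := dTanc_nonneg hf h0 h1 hs.2
  have hd2 := dTanc_nonneg hf h0 h2 ht.2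
  simp only [dT]
  linarith

lemma dL_symm (f : ℝ → ℝ) (s t : ℝ) : dL f s t = dL f t s := by
  simp only [dL]
  rw [mrca_comm f s t, cdel_symm]
  ring

lemma dT_symm (f : ℝ → ℝ) (s t : ℝ) : dT f s t = dT f t s := by
  simp only [dT]
  rw [mrca_comm f s t]
  ring

lemma dL_self (hf : IsExcursion f) {t : ℝ} (ht : t ∈ Icc (0:ℝ) 1) : dL f t t = 0 := by
  simp only [dL]
  rw [mrca_self hf ht, cdel_self (hf.jump_nonneg t ht), dO_self]
  ring

lemma dT_self (hf : IsExcursion f) {t : ℝ} (ht : t ∈ Icc (0:ℝ) 1) : dT f t t = 0 := by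
  simp only [dT]
  rw [mrca_self hf ht, dTanc_self]
  ring

lemma dT_tri_aux (hf : IsExcursion f) {s t u : ℝ} (hs : s ∈ Icc (0:ℝ) 1)
    (ht : t ∈ Icc (0:ℝ) 1) (hu : u ∈ Icc (0:ℝ) 1)
    (hord : mrca f s t ≤ mrca f t u) : dT f s u ≤ dT f s t + dT f t u := by
  obtain ⟨h10, h1s, h1t⟩ := mrca_spec hf hs ht
  obtain ⟨h20, h2t, h2u⟩ := mrca_spec hf ht hu
  obtain ⟨h30, h3s, h3u⟩ := mrca_spec hf hs hu
  rcases eq_or_lt_of_le hord with heq | hlt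
  · have h1u : pre f (mrca f s t) u := by rw [heq]; exact h2u
    have hmn : mrca f s t ≤ mrca f s u := mrca_ge hf h10 h1s h1u
    have hpmn : pre f (mrca f s t) (mrca f s u) := pre_comp hf h1s h3s hmn
    have hs1 : dTanc f (mrca f s u) s ≤ dTanc f (mrca f s t) s := by
      rcases eq_or_lt_of_le hmn with heq2 | hlt2
      · rw [← heq2]
      · rw [dTanc_split hf h10 hlt2 hpmn h3s hs.2]
        have := dTanc_nonneg hf h10 hpmn (h3s.1.trans hs.2)
        linarith
    have hu1 : dTanc f (mrca f s u) u ≤ dTanc f (mrca f s t) u := by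
      rcases eq_or_lt_of_le hmn with heq2 | hlt2
      · rw [← heq2]
      · rw [dTanc_split hf h10 hlt2 hpmn h3u hu.2]
        have := dTanc_nonneg hf h10 hpmn (h3s.1.trans hs.2)
        linarith
    have hTt1 := dTanc_nonneg hf h10 h1t ht.2
    simp only [dT]
    rw [← heq]
    linarith
  · have heqm : mrca f s u = mrca f s t := mrca_eq_left hf hs ht hu hlt
    have h12 : pre f (mrca f s t) (mrca f t u) := pre_comp hf h1t h2t hlt.le
    have hAu : dTanc f (mrca f s t) u
        = dTanc f (mrca f s t) (mrca f t u) + dTanc f (mrca f t u) u :=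
      dTanc_split hf h10 hlt h12 h2u hu.2
    have hAt : dTanc f (mrca f s t) t
        = dTanc f (mrca f s t) (mrca f t u) + dTanc f (mrca f t u) t :=
      dTanc_split hf h10 hlt h12 h2t ht.2
    have hTt := dTanc_nonneg hf h20 h2t ht.2
    simp only [dT]
    rw [heqm]
    linarith

lemma dT_tri (hf : IsExcursion f) {s t u : ℝ} (hs : s ∈ Icc (0:ℝ) 1)
    (ht : t ∈ Icc (0:ℝ) 1) (hu : u ∈ Icc (0:ℝ) 1) :
    dT f s u ≤ dT f s t + dT f t u := by
  rcases le_total (mrca f s t) (mrca f t u) with h | h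
  · exact dT_tri_aux hf hs ht hu h
  · have h' : mrca f u t ≤ mrca f t s := by
      rw [mrca_comm f u t, mrca_comm f t s]
      exact h
    have htri := dT_tri_aux hf hu ht hs h'
    rw [dT_symm f u t, dT_symm f t s, dT_symm f u s] at htri
    linarith

lemma dL_tri_aux (hf : IsExcursion f) {s t u : ℝ} (hs : s ∈ Icc (0:ℝ) 1)
    (ht : t ∈ Icc (0:ℝ) 1) (hu : u ∈ Icc (0:ℝ) 1)
    (hord : mrca f s t ≤ mrca f t u) : dL f s u ≤ dL f s t + dL f t u := by
  obtain ⟨h10, h1s, h1t⟩ := mrca_spec hf hs ht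
  obtain ⟨h20, h2t, h2u⟩ := mrca_spec hf ht hu
  obtain ⟨h30, h3s, h3u⟩ := mrca_spec hf hs hu
  have hm1I : mrca f s t ∈ Icc (0:ℝ) 1 := ⟨h10, h1s.1.trans hs.2⟩
  have hm2I : mrca f t u ∈ Icc (0:ℝ) 1 := ⟨h20, h2t.1.trans ht.2⟩
  have hnI : mrca f s u ∈ Icc (0:ℝ) 1 := ⟨h30, h3s.1.trans hs.2⟩
  rcases eq_or_lt_of_le hord with heq | hlt
  · -- the two mrcas coincide
    have h1u : pre f (mrca f s t) u := by rw [heq]; exact h2u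
    have hmn : mrca f s t ≤ mrca f s u := mrca_ge hf h10 h1s h1u
    have hpmn : pre f (mrca f s t) (mrca f s u) := pre_comp hf h1s h3s hmn
    have hjm := hf.jump_nonneg _ hm1I
    have hxs1 := xst_bounds hf hm1I h1s.1
    have hxt1 := xst_bounds hf hm1I h1t.1
    have hxu1 := xst_bounds hf hm1I h1u.1
    have hdOt := dO_nonneg hf h10 ht.2
    rcases eq_or_lt_of_le hmn with heq2 | hlt2
    · have hδ : cdel f (mrca f s t) (xst f (mrca f s t) s) (xst f (mrca f s t) u)
          ≤ cdel f (mrca f s t) (xst f (mrca f s t) s) (xst f (mrca f s t) t)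
            + cdel f (mrca f s t) (xst f (mrca f s t) t) (xst f (mrca f s t) u) := by
        simp only [cdel]
        exact circle_tri hxs1.1 hxs1.2 hxt1.1 hxt1.2 hxu1.1 hxu1.2
      simp only [dL]
      rw [← heq2, ← heq]
      linarith
    · have hjn := hf.jump_nonneg _ hnI
      have hxs := xst_bounds hf hnI h3s.1
      have hxu := xst_bounds hf hnI h3u.1
      have hδ : cdel f (mrca f s u) (xst f (mrca f s u) s) (xst f (mrca f s u) u)
          ≤ cdel f (mrca f s u) 0 (xst f (mrca f s u) s)
            + cdel f (mrca f s u) 0 (xst f (mrca f s u) u) := by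
        simp only [cdel]
        rw [abs_sub_comm 0 (xst f (mrca f s u) s)]
        exact circle_tri hxs.1 hxs.2 le_rfl hjn hxu.1 hxu.2
      have hsplit_s : dO f (mrca f s t) s
          = dO f (mrca f s t) (mrca f s u) + cdel f (mrca f s u) 0 (xst f (mrca f s u) s)
            + dO f (mrca f s u) s :=
        dO_split hf h10 hlt2 hpmn h3s hs.2
      have hsplit_u : dO f (mrca f s t) u
          = dO f (mrca f s t) (mrca f s u) + cdel f (mrca f s u) 0 (xst f (mrca f s u) u)
            + dO f (mrca f s u) u :=
        dO_split hf h10 hlt2 hpmn h3u hu.2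
      have hdOmn := dO_nonneg hf h10 hnI.2
      have hc1 : 0 ≤ cdel f (mrca f s t) (xst f (mrca f s t) s) (xst f (mrca f s t) t) :=
        cdel_nonneg (abs_le.mpr ⟨by linarith [hxs1.1, hxt1.2], by linarith [hxs1.2, hxt1.1]⟩)
      have hc2 : 0 ≤ cdel f (mrca f s t) (xst f (mrca f s t) t) (xst f (mrca f s t) u) :=
        cdel_nonneg (abs_le.mpr ⟨by linarith [hxt1.1, hxu1.2], by linarith [hxt1.2, hxu1.1]⟩)
      simp only [dL]
      rw [← heq]
      linarith
  · -- strict case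
    have heqm : mrca f s u = mrca f s t := mrca_eq_left hf hs ht hu hlt
    have h12 : pre f (mrca f s t) (mrca f t u) := pre_comp hf h1t h2t hlt.le
    have hxu_t : xst f (mrca f s t) u = xst f (mrca f s t) t := by
      rw [xst_stable hf h10 hlt h2u hu.2, xst_stable hf h10 hlt h2t ht.2]
    have hsu : dO f (mrca f s t) u
        = dO f (mrca f s t) (mrca f t u) + cdel f (mrca f t u) 0 (xst f (mrca f t u) u)
          + dO f (mrca f t u) u :=
      dO_split hf h10 hlt h12 h2u hu.2
    have hst : dO f (mrca f s t) t
        = dO f (mrca f s t) (mrca f t u) + cdel f (mrca f t u) 0 (xst f (mrca f t u) t)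
          + dO f (mrca f t u) t :=
      dO_split hf h10 hlt h12 h2t ht.2
    have hjm2 := hf.jump_nonneg _ hm2I
    have hxt2 := xst_bounds hf hm2I h2t.1
    have hxu2 := xst_bounds hf hm2I h2u.1
    have hδ2 : cdel f (mrca f t u) 0 (xst f (mrca f t u) u)
        ≤ cdel f (mrca f t u) 0 (xst f (mrca f t u) t)
          + cdel f (mrca f t u) (xst f (mrca f t u) t) (xst f (mrca f t u) u) := by
      simp only [cdel]
      exact circle_tri le_rfl hjm2 hxt2.1 hxt2.2 hxu2.1 hxu2.2
    have hdOt2 := dO_nonneg hf h20 ht.2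
    simp only [dL]
    rw [heqm, hxu_t]
    linarith

lemma dL_tri (hf : IsExcursion f) {s t u : ℝ} (hs : s ∈ Icc (0:ℝ) 1)
    (ht : t ∈ Icc (0:ℝ) 1) (hu : u ∈ Icc (0:ℝ) 1) :
    dL f s u ≤ dL f s t + dL f t u := by
  rcases le_total (mrca f s t) (mrca f t u) with h | h
  · exact dL_tri_aux hf hs ht hu h
  · have h' : mrca f u t ≤ mrca f t s := by
      rw [mrca_comm f u t, mrca_comm f t s]
      exact h
    have htri := dL_tri_aux hf hu ht hs h'
    rw [dL_symm f u t, dL_symm f t s, dL_symm f u s] at htri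
    linarith

end ExcAux
theorem statement4 (f : ℝ → ℝ) (hf : IsExcursion f) :
    (∀ s ∈ Icc (0:ℝ) 1, ∀ t ∈ Icc (0:ℝ) 1,
        0 ≤ dL f s t ∧ 0 ≤ dT f s t ∧ 0 ≤ dV f s t) ∧
    (∀ s ∈ Icc (0:ℝ) 1, ∀ t ∈ Icc (0:ℝ) 1,
        dL f s t = dL f t s ∧ dT f s t = dT f t s ∧ dV f s t = dV f t s) ∧
    (∀ t ∈ Icc (0:ℝ) 1, dL f t t = 0 ∧ dT f t t = 0 ∧ dV f t t = 0) ∧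
    (∀ s ∈ Icc (0:ℝ) 1, ∀ t ∈ Icc (0:ℝ) 1, ∀ u ∈ Icc (0:ℝ) 1,
        dL f s u ≤ dL f s t + dL f t u ∧
        dT f s u ≤ dT f s t + dT f t u ∧
        dV f s u ≤ dV f s t + dV f t u) := by
  refine ⟨?_, ?_, ?_, ?_⟩
  · intro s hs t ht
    have h1 := ExcAux.dL_nonneg hf hs ht
    have h2 := ExcAux.dT_nonneg hf hs ht
    exact ⟨h1, h2, by simp only [dV]; linarith⟩
  · intro s hs t ht
    have h1 := ExcAux.dL_symm f s t
    have h2 := ExcAux.dT_symm f s t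
    exact ⟨h1, h2, by simp only [dV]; rw [h1, h2]⟩
  · intro t ht
    have h1 := ExcAux.dL_self hf ht
    have h2 := ExcAux.dT_self hf ht
    exact ⟨h1, h2, by simp only [dV]; rw [h1, h2]; ring⟩
  · intro s hs t ht u hu
    have h1 := ExcAux.dL_tri hf hs ht hu
    have h2 := ExcAux.dT_tri hf hs ht hu
    exact ⟨h1, h2, by simp only [dV]; linarith⟩
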